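/- Let P be symmetric stochastic with eigenvalue 1 simple and all other eigenvalues of absolute value < 1. If there exists k ∈ {1,...,K} such that ∏_{j=1}^n A_{j,k} > ∏_{j=1}^n A_{j,l} for all l ≠ k, then for every i = 1,...,n the iterates W_i^{(r)} of the normalized multiplicative filtering scheme (with ε = 0, initialized at W^{(0)} = A) converge to the k-th unit vector e_k as r → ∞. -/

import Mathlib

open Matrix
open Filter

lemma aux_spectral {n : ℕ} (P : Matrix (Fin n) (Fin n) ℝ) (hsym : P.IsSymm)
    (hrowP : ∀ i, ∑ j, P i j = 1)
    (hsimple : ∀ v : Fin n → ℝ, P.mulVec v = v → ∃ c : ℝ, v = Function.const (Fin n) c)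
    (hspec : ∀ (μ : ℝ) (v : Fin n → ℝ), v ≠ 0 → P.mulVec v = μ • v → μ = 1 ∨ |μ| < 1)
    (x : Fin n → ℝ) (y : ℕ → Fin n → ℝ) (hy0 : y 0 = x)
    (hyrec : ∀ r, y (r + 1) = y r + P.mulVec (y r)) (i : Fin n) :
    Filter.Tendsto (fun r => ((2:ℝ)⁻¹) ^ r * y r i) Filter.atTop
      (nhds ((∑ j, x j) / n)) := by
  have hP : P.IsHermitian := by
    rwa [Matrix.IsHermitian, Matrix.conjTranspose_eq_transpose_of_trivial]
  set B := hP.eigenvectorBasis with hB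
  set μ := hP.eigenvalues with hμ
  set w : Fin n → Fin n → ℝ := fun j => ⇑(B j) with hw
  have hPw : ∀ j, P.mulVec (w j) = μ j • w j := fun j => hP.mulVec_eigenvectorBasis j
  set c : Fin n → ℝ := fun j => ∑ i, w j i * x i with hc
  have hwne : ∀ j, w j ≠ 0 := by
    intro j h
    exact B.orthonormal.ne_zero j (by ext i; exact congrFun h i)
  -- decomposition of x
  have hxdec : ∀ i, x i = ∑ j, c j * w j i := by
    intro i
    have h2 : (∑ j : Fin n, B.repr (WithLp.toLp 2 x) j • B j) i = x i :=
      congrArg (fun v : EuclideanSpace ℝ (Fin n) => v i) (B.sum_repr _)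
    rw [← h2]
    rw [show (∑ j : Fin n, B.repr (WithLp.toLp 2 x) j • B j) i
        = ∑ j : Fin n, B.repr (WithLp.toLp 2 x) j * w j i from
      by rw [WithLp.ofLp_sum, Finset.sum_apply]; rfl]
    refine Finset.sum_congr rfl fun j _ => ?_
    congr 1
    rw [B.repr_apply_apply, PiLp.inner_apply]
    simp [RCLike.inner_apply, hc, hw, mul_comm]
  -- closed form for the iterates
  have key : ∀ r, y r = ∑ j, (c j * (1 + μ j) ^ r) • w j := by
    intro r
    induction r with
    | zero =>
      funext i
      rw [hy0, hxdec i, Finset.sum_apply]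
      simp
    | succ r ih =>
      rw [hyrec r, ih]
      have hmv : P.mulVec (∑ j, (c j * (1 + μ j) ^ r) • w j)
          = ∑ j, (c j * (1 + μ j) ^ r) • (μ j • w j) := by
        rw [show P.mulVec (∑ j, (c j * (1 + μ j) ^ r) • w j)
            = P.mulVecLin (∑ j, (c j * (1 + μ j) ^ r) • w j) from rfl]
        rw [map_sum]
        refine Finset.sum_congr rfl fun j _ => ?_
        rw [_root_.map_smul]
        rw [show P.mulVecLin (w j) = P.mulVec (w j) from rfl, hPw j]
      rw [hmv, ← Finset.sum_add_distrib]
      refine Finset.sum_congr rfl fun j _ => ?_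
      rw [smul_smul, ← add_smul]
      congr 1
      ring
  have keyi : ∀ r, ((2:ℝ)⁻¹) ^ r * y r i = ∑ j, c j * ((1 + μ j) * 2⁻¹) ^ r * w j i := by
    intro r
    rw [key r, Finset.sum_apply, Finset.mul_sum]
    refine Finset.sum_congr rfl fun j _ => ?_
    simp only [Pi.smul_apply, smul_eq_mul, mul_pow]
    ring
  have hterm : ∀ j, Tendsto (fun r => c j * ((1 + μ j) * 2⁻¹) ^ r * w j i) atTop
      (nhds (if μ j = 1 then c j * w j i else 0)) := by
    intro j
    by_cases h : μ j = 1
    · have heq : (fun r : ℕ => c j * ((1 + μ j) * 2⁻¹) ^ r * w j i)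
          = fun _ => c j * w j i := by
        funext r; rw [h]; norm_num
      rw [heq, if_pos h]
      exact tendsto_const_nhds
    · rw [if_neg h]
      have habs : |(1 + μ j) * 2⁻¹| < 1 := by
        rcases hspec (μ j) (w j) (hwne j) (hPw j) with h1 | h1
        · exact absurd h1 h
        · rw [abs_lt] at h1 ⊢
          constructor <;> nlinarith [h1.1, h1.2]
      have h0 := tendsto_pow_atTop_nhds_zero_of_abs_lt_one habs
      have h2 := (h0.const_mul (c j)).mul_const (w j i)
      simpa using h2
  have hsum : Tendsto (fun r => ((2:ℝ)⁻¹) ^ r * y r i) atTop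
      (nhds (∑ j, if μ j = 1 then c j * w j i else 0)) := by
    have h3 := tendsto_finset_sum Finset.univ (fun j (_ : j ∈ Finset.univ) => hterm j)
    exact h3.congr fun r => (keyi r).symm
  -- identify the limit value
  set L : Fin n → ℝ := ∑ j ∈ Finset.univ.filter (fun j => μ j = 1), c j • w j with hL
  have hLval : ∀ i', L i' = ∑ j, if μ j = 1 then c j * w j i' else 0 := by
    intro i'
    rw [hL, Finset.sum_apply, Finset.sum_filter]
    refine Finset.sum_congr rfl fun j _ => ?_
    by_cases h : μ j = 1 <;> simp [h]
  have hPL : P.mulVec L = L := by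
    rw [hL, show P.mulVec (∑ j ∈ Finset.univ.filter (fun j => μ j = 1), c j • w j)
        = P.mulVecLin (∑ j ∈ Finset.univ.filter (fun j => μ j = 1), c j • w j) from rfl,
      map_sum]
    refine Finset.sum_congr rfl fun j hj => ?_
    rw [_root_.map_smul, show P.mulVecLin (w j) = P.mulVec (w j) from rfl, hPw j,
      (Finset.mem_filter.mp hj).2, one_smul]
  obtain ⟨a, ha⟩ := hsimple L hPL
  set u : Fin n → ℝ := fun _ => 1 with hu
  have hcol : ∀ i', ∑ j', P j' i' = 1 := by
    intro i'
    rw [show ∑ j', P j' i' = ∑ j', P i' j' from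
      Finset.sum_congr rfl fun j' _ => hsym.apply i' j']
    exact hrowP i'
  have horth : ∀ j, μ j ≠ 1 → ∑ i', w j i' = 0 := by
    intro j hj
    have h1 : u ⬝ᵥ P.mulVec (w j) = μ j * (u ⬝ᵥ w j) := by
      rw [hPw j]
      simp [dotProduct, Finset.mul_sum]
      ring_nf
      exact Finset.sum_congr rfl fun i' _ => by ring
    have h2 : u ⬝ᵥ P.mulVec (w j) = u ⬝ᵥ w j := by
      rw [Matrix.dotProduct_mulVec]
      congr 1
      funext i'
      simp [Matrix.vecMul, dotProduct, hu, hcol i']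
    have h3 : (μ j - 1) * (u ⬝ᵥ w j) = 0 := by
      rw [h2] at h1
      nlinarith [h1]
    have h4 : u ⬝ᵥ w j = 0 := by
      rcases mul_eq_zero.mp h3 with h | h
      · exact absurd (by linarith : μ j = 1) hj
      · exact h
    simpa [dotProduct, hu] using h4
  have hsumL : ∑ i', L i' = ∑ i', x i' := by
    have hx2 : ∀ i', x i' - L i'
        = ∑ j ∈ Finset.univ.filter (fun j => ¬ μ j = 1), c j * w j i' := by
      intro i'
      rw [hxdec i', hLval i', Finset.sum_filter, ← Finset.sum_sub_distrib]
      refine Finset.sum_congr rfl fun j _ => ?_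
      by_cases h : μ j = 1 <;> simp [h]
    have h5 : ∑ i', (x i' - L i') = 0 := by
      have h6 : ∀ i', x i' - L i'
          = ∑ j ∈ Finset.univ.filter (fun j => ¬ μ j = 1), c j * w j i' := hx2
      rw [Finset.sum_congr rfl fun i' _ => h6 i', Finset.sum_comm]
      refine Finset.sum_eq_zero fun j hj => ?_
      rw [← Finset.mul_sum, horth j (Finset.mem_filter.mp hj).2, mul_zero]
    rw [Finset.sum_sub_distrib] at h5
    linarith
  have hn : (0:ℝ) < n := by exact_mod_cast i.pos
  have hval : (∑ j, if μ j = 1 then c j * w j i else 0) = (∑ j, x j) / n := by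
    rw [← hLval i, ha]
    have h7 : ∑ i', L i' = n * a := by
      rw [ha]
      simp [Function.const, Finset.sum_const, Finset.card_univ, mul_comm]
    rw [ha] at hsumL h7
    show a = (∑ j, x j) / n
    rw [← hsumL, h7]
    field_simp
  rwa [hval] at hsum


/-- If `1` is a simple eigenvalue of the symmetric stochastic matrix `P` and
all other eigenvalues have absolute value `< 1`, and if the `k`-th column of `A`
has the strictly largest entry product, then all rows of the iterates of the
multiplicative filtering scheme (ε = 0) converge to the `k`-th unit vector. -/
theorem stmt_6 {n K : ℕ} (A : Matrix (Fin n) (Fin K) ℝ)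
    (hApos : ∀ i k, 0 < A i k) (hArow : ∀ i, ∑ k, A i k = 1)
    (P : Matrix (Fin n) (Fin n) ℝ) (hsym : P.IsSymm)
    (hnonneg : ∀ i j, 0 ≤ P i j) (hrowP : ∀ i, ∑ j, P i j = 1)
    (hsimple : ∀ v : Fin n → ℝ, P.mulVec v = v → ∃ c : ℝ, v = Function.const (Fin n) c)
    (hspec : ∀ (μ : ℝ) (v : Fin n → ℝ), v ≠ 0 → P.mulVec v = μ • v → μ = 1 ∨ |μ| < 1)
    (k : Fin K)
    (hk : ∀ l : Fin K, l ≠ k → ∏ j, A j l < ∏ j, A j k)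
    (W : ℕ → Matrix (Fin n) (Fin K) ℝ)
    (hW0 : W 0 = A)
    (hWiter : ∀ r i k',
      W (r + 1) i k' =
        (W r i k' * ∏ j, (W r j k') ^ (P i j)) /
          (∑ k'', W r i k'' * ∏ j, (W r j k'') ^ (P i j))) :
    ∀ i, Filter.Tendsto (fun r => W r i) Filter.atTop
      (nhds (fun k' : Fin K => if k' = k then (1 : ℝ) else 0)) := by
  classical
  -- positivity of all iterates
  have hKne : (Finset.univ : Finset (Fin K)).Nonempty := ⟨k, Finset.mem_univ k⟩
  have hWpos : ∀ r i k', 0 < W r i k' := by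
    intro r
    induction r with
    | zero => intro i k'; rw [hW0]; exact hApos i k'
    | succ r ih =>
      intro i k'
      rw [hWiter]
      apply div_pos
      · exact mul_pos (ih i k') (Finset.prod_pos fun j _ =>
          Real.rpow_pos_of_pos (ih j k') _)
      · exact Finset.sum_pos (fun k'' _ => mul_pos (ih i k'') (Finset.prod_pos fun j _ =>
          Real.rpow_pos_of_pos (ih j k'') _)) hKne
  -- row sums are 1
  have hWsum : ∀ r i, ∑ k'', W r i k'' = 1 := by
    intro r i
    cases r with
    | zero => rw [hW0]; exact hArow i
    | succ r =>
      have hden : 0 < ∑ k'', W r i k'' * ∏ j, (W r j k'') ^ (P i j) :=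
        Finset.sum_pos (fun k'' _ => mul_pos (hWpos r i k'') (Finset.prod_pos fun j _ =>
          Real.rpow_pos_of_pos (hWpos r j k'') _)) hKne
      rw [Finset.sum_congr rfl fun k' _ => hWiter r i k', ← Finset.sum_div,
        div_self (ne_of_gt hden)]
  intro i
  -- log-ratio dynamics
  set Y : Fin K → ℕ → Fin n → ℝ :=
    fun l r i' => Real.log (W r i' l) - Real.log (W r i' k) with hY
  have hlognum : ∀ r i' l, Real.log (W r i' l * ∏ j, (W r j l) ^ (P i' j))
      = Real.log (W r i' l) + ∑ j, P i' j * Real.log (W r j l) := by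
    intro r i' l
    rw [Real.log_mul (ne_of_gt (hWpos r i' l))
        (ne_of_gt (Finset.prod_pos fun j _ => Real.rpow_pos_of_pos (hWpos r j l) _)),
      Real.log_prod (fun j _ => ne_of_gt (Real.rpow_pos_of_pos (hWpos r j l) _))]
    congr 1
    exact Finset.sum_congr rfl fun j _ => Real.log_rpow (hWpos r j l) _
  have hYrec : ∀ l r, Y l (r + 1) = Y l r + P.mulVec (Y l r) := by
    intro l r
    funext i'
    have hden : 0 < ∑ k'', W r i' k'' * ∏ j, (W r j k'') ^ (P i' j) :=
      Finset.sum_pos (fun k'' _ => mul_pos (hWpos r i' k'') (Finset.prod_pos fun j _ =>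
        Real.rpow_pos_of_pos (hWpos r j k'') _)) hKne
    have hnum : ∀ l', 0 < W r i' l' * ∏ j, (W r j l') ^ (P i' j) :=
      fun l' => mul_pos (hWpos r i' l') (Finset.prod_pos fun j _ =>
        Real.rpow_pos_of_pos (hWpos r j l') _)
    show Real.log (W (r+1) i' l) - Real.log (W (r+1) i' k)
      = (Real.log (W r i' l) - Real.log (W r i' k)) + (P.mulVec (Y l r)) i'
    rw [hWiter r i' l, hWiter r i' k,
      Real.log_div (ne_of_gt (hnum l)) (ne_of_gt hden),
      Real.log_div (ne_of_gt (hnum k)) (ne_of_gt hden),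
      hlognum r i' l, hlognum r i' k]
    have hmv : (P.mulVec (Y l r)) i' = ∑ j, P i' j * (Real.log (W r j l) - Real.log (W r j k)) := by
      simp [Matrix.mulVec, dotProduct, hY]
    rw [hmv]
    rw [Finset.sum_congr rfl fun j _ => mul_sub (P i' j) (Real.log (W r j l)) (Real.log (W r j k)),
      Finset.sum_sub_distrib]
    ring
  have hexp : ∀ l r i', Real.exp (Y l r i') = W r i' l / W r i' k := by
    intro l r i'
    rw [hY]
    rw [Real.exp_sub, Real.exp_log (hWpos r i' l), Real.exp_log (hWpos r i' k)]
  have hWform : ∀ r l, W r i l = Real.exp (Y l r i) / ∑ k'', Real.exp (Y k'' r i) := by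
    intro r l
    have hs : ∑ k'', Real.exp (Y k'' r i) = (W r i k)⁻¹ := by
      rw [Finset.sum_congr rfl fun k'' _ => hexp k'' r i]
      rw [Finset.sum_congr rfl fun k'' _ => div_eq_mul_inv (W r i k'') (W r i k),
        ← Finset.sum_mul, hWsum r i, one_mul]
    rw [hs, hexp, div_inv_eq_mul, div_mul_cancel₀]
    exact ne_of_gt (hWpos r i k)
  -- convergence of each exp term
  have hTl : ∀ l, Filter.Tendsto (fun r => Real.exp (Y l r i)) Filter.atTop
      (nhds (if l = k then 1 else 0)) := by
    intro l
    by_cases hlk : l = k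
    · subst hlk
      have : (fun r => Real.exp (Y l r i)) = fun _ => 1 := by
        funext r; rw [hY]; simp
      rw [this, if_pos rfl]
      exact tendsto_const_nhds
    · rw [if_neg hlk]
      -- the average of the initial log-ratios is negative
      have hneg : (∑ j, Y l 0 j) / n < 0 := by
        apply div_neg_of_neg_of_pos
        · rw [hY]
          simp only
          rw [Finset.sum_sub_distrib]
          rw [show ∑ j, Real.log (W 0 j l) = Real.log (∏ j, A j l) by
              rw [hW0, Real.log_prod (fun j _ => ne_of_gt (hApos j l))],
            show ∑ j, Real.log (W 0 j k) = Real.log (∏ j, A j k) by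
              rw [hW0, Real.log_prod (fun j _ => ne_of_gt (hApos j k))]]
          have := Real.log_lt_log (Finset.prod_pos fun j _ => hApos j l) (hk l hlk)
          linarith
        · exact_mod_cast i.pos
      have hhalf := aux_spectral P hsym hrowP hsimple hspec (Y l 0) (Y l) rfl (hYrec l) i
      have hbot : Filter.Tendsto (fun r => Y l r i) Filter.atTop Filter.atBot := by
        have h2 : Filter.Tendsto (fun r : ℕ => (2:ℝ) ^ r) Filter.atTop Filter.atTop :=
          tendsto_pow_atTop_atTop_of_one_lt one_lt_two
        have h3 := h2.atTop_mul_neg hneg hhalf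
        refine h3.congr fun r => ?_
        rw [← mul_assoc, ← mul_pow]
        norm_num
      exact Real.tendsto_exp_atBot.comp hbot
  have hTsum : Filter.Tendsto (fun r => ∑ k'', Real.exp (Y k'' r i)) Filter.atTop
      (nhds 1) := by
    have h4 := tendsto_finset_sum Finset.univ (fun l (_ : l ∈ Finset.univ) => hTl l)
    have h5 : (∑ l, if l = k then (1:ℝ) else 0) = 1 := by simp
    rwa [h5] at h4
  rw [tendsto_pi_nhds]
  intro l
  have h6 : Filter.Tendsto (fun r => Real.exp (Y l r i) / ∑ k'', Real.exp (Y k'' r i))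
      Filter.atTop (nhds ((if l = k then 1 else 0) / 1)) :=
    (hTl l).div hTsum one_ne_zero
  rw [div_one] at h6
  exact h6.congr fun r => (hWform r l).symm
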